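/- Let X be a Banach space, T a bounded linear operator on X with relatively weakly compact orbits, and K ⊆ X a relatively norm compact subset. Then the set Orb(K) = {Tⁿ x : n ∈ ℕ, x ∈ K} is relatively compact in the weak topology of X. -/

import Mathlib

open Filter Topology

variable {X : Type*} [NormedAddCommGroup X] [NormedSpace ℂ X]

/-- An operator has relatively weakly compact orbits if every orbit `{Tⁿx : n ∈ ℕ}` is
relatively compact in the weak topology of `X`. -/
def RelWeaklyCompactOrbits (T : X →L[ℂ] X) : Prop :=
  ∀ x : X, IsCompact (closure (Set.range fun n : ℕ => toWeakSpace ℂ X ((T ^ n) x)))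

/-- The natural map from `X` (with its weak topology) to the bidual with its weak-star
topology. -/
noncomputable def jWD (x : X) : WeakDual ℂ (StrongDual ℂ X) :=
  StrongDual.toWeakDual (NormedSpace.inclusionInDoubleDual ℂ X x)

lemma jWD_apply (x : X) (f : StrongDual ℂ X) : jWD x f = f x := rfl

lemma continuous_jWD :
    Continuous fun z : WeakSpace ℂ X => jWD ((toWeakSpace ℂ X).symm z) := by
  apply WeakBilin.continuous_of_continuous_eval
  intro f
  exact WeakBilin.eval_continuous ((topDualPairing ℂ X).flip) f

lemma flip_topDualPairing_injective :
    Function.Injective ((topDualPairing ℂ X).flip) := by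
  intro x y h
  refine (NormedSpace.eq_iff_forall_dual_eq ℂ).2 fun g => ?_
  exact LinearMap.congr_fun h g

/-- If `T` has relatively weakly compact orbits and `K` is relatively norm compact, then
`Orb(K) = {Tⁿ x : n ∈ ℕ, x ∈ K}` is relatively weakly compact. -/
theorem orbit_of_relCompact_relWeaklyCompact
    [CompleteSpace X] (T : X →L[ℂ] X) (hT : RelWeaklyCompactOrbits T)
    (K : Set X) (hK : IsCompact (closure K)) :
    IsCompact (closure (toWeakSpace ℂ X '' (⋃ n : ℕ, (T ^ n) '' K))) := by
  classical
  -- Step 1 : each orbit is norm bounded (Banach–Steinhaus in the dual).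
  have hORB : ∀ x : X, ∃ C : ℝ, ∀ n : ℕ, ‖(T ^ n) x‖ ≤ C := by
    intro x
    have hA := hT x
    have hpt : ∀ f : StrongDual ℂ X, ∃ C, ∀ n : ℕ,
        ‖NormedSpace.inclusionInDoubleDual ℂ X ((T ^ n) x) f‖ ≤ C := by
      intro f
      have hc : Continuous fun z : WeakSpace ℂ X => (topDualPairing ℂ X).flip z f :=
        WeakBilin.eval_continuous _ f
      have hcomp : IsCompact ((fun z : WeakSpace ℂ X => (topDualPairing ℂ X).flip z f) ''
          closure (Set.range fun n : ℕ => toWeakSpace ℂ X ((T ^ n) x))) := hA.image hc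
      obtain ⟨C, hC⟩ := hcomp.isBounded.exists_norm_le
      refine ⟨C, fun n => ?_⟩
      exact hC _ ⟨toWeakSpace ℂ X ((T ^ n) x), subset_closure ⟨n, rfl⟩, rfl⟩
    obtain ⟨C, hC⟩ := banach_steinhaus (g := fun n : ℕ =>
      NormedSpace.inclusionInDoubleDual ℂ X ((T ^ n) x)) hpt
    refine ⟨C, fun n => ?_⟩
    calc ‖(T ^ n) x‖ = ‖NormedSpace.inclusionInDoubleDual ℂ X ((T ^ n) x)‖ :=
        ((NormedSpace.inclusionInDoubleDualLi ℂ (E := X)).norm_map _).symm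
      _ ≤ C := hC n
  -- Step 2 : uniform bound on the powers of `T`.
  obtain ⟨M, hM⟩ := banach_steinhaus (g := fun n : ℕ => T ^ n) hORB
  have hM0 : 0 ≤ M := le_trans (norm_nonneg _) (hM 0)
  obtain ⟨r, hr⟩ := hK.isBounded.exists_norm_le
  -- Notation
  set S : Set X := ⋃ n : ℕ, (T ^ n) '' K with hSdef
  set S' : Set (WeakSpace ℂ X) := toWeakSpace ℂ X '' S with hS'def
  set jw : WeakSpace ℂ X → WeakDual ℂ (StrongDual ℂ X) :=
    fun z => jWD ((toWeakSpace ℂ X).symm z) with hjwdef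
  have hjwc : Continuous jw := continuous_jWD
  -- elements of S are bounded by M * r
  have hmemS : ∀ y ∈ S, ‖y‖ ≤ M * r := by
    intro y hy
    obtain ⟨n, x, hx, rfl⟩ : ∃ n x, x ∈ K ∧ (T ^ n) x = y := by
      simpa [hSdef, Set.mem_iUnion, eq_comm] using hy
    calc ‖(T ^ n) x‖ ≤ ‖T ^ n‖ * ‖x‖ := (T ^ n).le_opNorm x
      _ ≤ M * r := by
          have hx' : ‖x‖ ≤ r := hr x (subset_closure hx)
          exact mul_le_mul (hM n) hx' (norm_nonneg _) hM0
  set Q : Set (WeakDual ℂ (StrongDual ℂ X)) := closure (jw '' S') with hQdef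
  -- Q is weak-star compact (Banach–Alaoglu).
  have hQK : IsCompact Q := by
    have hball := WeakDual.isCompact_closedBall (𝕜 := ℂ) (E := StrongDual ℂ X) 0 (M * r)
    refine hball.of_isClosed_subset isClosed_closure
      (closure_minimal ?_ (WeakDual.isClosed_closedBall 0 (M * r)))
    rintro - ⟨-, ⟨y, hy, rfl⟩, rfl⟩
    show WeakDual.toStrongDual (jWD y) ∈ Metric.closedBall 0 (M * r)
    rw [Metric.mem_closedBall]; refine le_of_eq_of_le (dist_zero_right (E := StrongDual ℂ (StrongDual ℂ X)) _) ?_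
    calc ‖NormedSpace.inclusionInDoubleDual ℂ X y‖ = ‖y‖ :=
        (NormedSpace.inclusionInDoubleDualLi ℂ (E := X)).norm_map y
      _ ≤ M * r := hmemS y hy
  -- Key step : Q ⊆ range jw.
  have hQsub : Q ⊆ Set.range jw := by
    intro q hq
    obtain ⟨F, hFS, hFq⟩ := mem_closure_iff_ultrafilter.1 hq
    have hsel : ∀ y ∈ jw '' S', ∃ p : ℕ × X, p.2 ∈ K ∧
        y = jw (toWeakSpace ℂ X ((T ^ p.1) p.2)) := by
      rintro - ⟨-, ⟨y, hy, rfl⟩, rfl⟩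
      obtain ⟨n, x, hx, rfl⟩ : ∃ n x, x ∈ K ∧ (T ^ n) x = y := by
        simpa [hSdef, Set.mem_iUnion, eq_comm] using hy
      exact ⟨⟨n, x⟩, hx, rfl⟩
    set sel : WeakDual ℂ (StrongDual ℂ X) → ℕ × X := fun y =>
      if h : ∃ p : ℕ × X, p.2 ∈ K ∧ y = jw (toWeakSpace ℂ X ((T ^ p.1) p.2)) then h.choose
      else (0, 0) with hseldef
    have hsel' : ∀ y ∈ jw '' S', (sel y).2 ∈ K ∧
        y = jw (toWeakSpace ℂ X ((T ^ (sel y).1) (sel y).2)) := by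
      intro y hy
      have h := hsel y hy
      simp only [hseldef, dif_pos h]
      exact h.choose_spec
    -- base points converge (in norm) along F to some x₀ in closure K
    have hKF : closure K ∈ F.map (fun y => (sel y).2) :=
      mem_map.2 (mem_of_superset hFS fun y hy => subset_closure (hsel' y hy).1)
    obtain ⟨x₀, hx₀K, hx₀⟩ := hK.ultrafilter_le_nhds' _ hKF
    have hx₀' : Tendsto (fun y => (sel y).2) F (𝓝 x₀) := by
      rwa [Ultrafilter.coe_map] at hx₀
    -- the orbit of x₀ is relatively weakly compact; push it to the bidual
    have hW : IsCompact (jw ''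
        closure (Set.range fun n : ℕ => toWeakSpace ℂ X ((T ^ n) x₀))) := (hT x₀).image hjwc
    set ψ : WeakDual ℂ (StrongDual ℂ X) → WeakDual ℂ (StrongDual ℂ X) :=
      fun y => jw (toWeakSpace ℂ X ((T ^ (sel y).1) x₀)) with hψdef
    have hWF : (jw '' closure (Set.range fun n : ℕ => toWeakSpace ℂ X ((T ^ n) x₀)))
        ∈ F.map ψ :=
      mem_map.2 (Filter.univ_mem' fun y => ⟨_, subset_closure ⟨(sel y).1, rfl⟩, rfl⟩)
    obtain ⟨q', hq'W, hq'⟩ := hW.ultrafilter_le_nhds' _ hWF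
    have hq'T : Tendsto ψ F (𝓝 q') := by rwa [Ultrafilter.coe_map] at hq'
    obtain ⟨z₁, -, rfl⟩ := hq'W
    refine ⟨z₁, ?_⟩
    symm
    -- show q = jw z₁ by testing against all functionals
    apply DFunLike.ext
    intro f
    have h1 : Tendsto (fun y : WeakDual ℂ (StrongDual ℂ X) => y f) F (𝓝 (q f)) :=
      ((WeakDual.eval_continuous f).tendsto q).mono_left hFq
    have h2 : Tendsto (fun y => ψ y f) F (𝓝 (jw z₁ f)) :=
      ((WeakDual.eval_continuous f).tendsto (jw z₁)).comp hq'T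
    have h3 : Tendsto (fun y => y f - ψ y f) F (𝓝 0) := by
      apply squeeze_zero_norm' (a := fun y => ‖f‖ * M * ‖(sel y).2 - x₀‖)
      · filter_upwards [hFS] with y hy
        obtain ⟨hyK, hyeq⟩ := hsel' y hy
        have hyf : y f = f ((T ^ (sel y).1) (sel y).2) := by
          conv_lhs => rw [hyeq]
          rfl
        have hψf : ψ y f = f ((T ^ (sel y).1) x₀) := rfl
        rw [hyf, hψf, ← map_sub f, ← map_sub (T ^ (sel y).1)]
        calc ‖f ((T ^ (sel y).1) ((sel y).2 - x₀))‖
            ≤ ‖f‖ * ‖(T ^ (sel y).1) ((sel y).2 - x₀)‖ := f.le_opNorm _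
          _ ≤ ‖f‖ * (M * ‖(sel y).2 - x₀‖) := by
              refine mul_le_mul_of_nonneg_left ?_ (norm_nonneg f)
              exact le_trans ((T ^ (sel y).1).le_opNorm _)
                (mul_le_mul_of_nonneg_right (hM _) (norm_nonneg _))
          _ = ‖f‖ * M * ‖(sel y).2 - x₀‖ := by ring
      · have hnorm : Tendsto (fun y => ‖(sel y).2 - x₀‖) F (𝓝 0) :=
          tendsto_iff_norm_sub_tendsto_zero.mp hx₀'
        simpa using hnorm.const_mul (‖f‖ * M)
    have := tendsto_nhds_unique (h1.sub h2) h3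
    exact sub_eq_zero.mp this
  -- Conclusion via ultrafilters.
  rw [isCompact_iff_ultrafilter_le_nhds']
  intro G hG
  have hGQ : Q ∈ G.map jw :=
    mem_map.2 (mem_of_superset hG fun z hz =>
      image_closure_subset_closure_image hjwc ⟨z, hz, rfl⟩)
  obtain ⟨qq, hqqQ, hqq⟩ := hQK.ultrafilter_le_nhds' _ hGQ
  obtain ⟨z₀, rfl⟩ := hQsub hqqQ
  have hGjw : Tendsto jw G (𝓝 (jw z₀)) := by rwa [Ultrafilter.coe_map] at hqq
  have hGz : Tendsto (id : WeakSpace ℂ X → WeakSpace ℂ X) G (𝓝 z₀) := by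
    refine (WeakBilin.tendsto_iff_forall_eval_tendsto (topDualPairing ℂ X).flip
      flip_topDualPairing_injective).2 ?_
    intro f
    exact ((WeakDual.eval_continuous f).tendsto (jw z₀)).comp hGjw
  refine ⟨z₀, ?_, hGz⟩
  have : z₀ ∈ closure (closure S') := mem_closure_iff_ultrafilter.2 ⟨G, hG, hGz⟩
  rwa [closure_closure] at this
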